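/- C_k(S,v,∞) is self-orthogonal if and only if there exists a polynomial g(x) = Σ_{s=0}^{n−2k} g_s x^s over F_q of degree at most n−2k such that (1) v_i² = u_i·g(a_i) for every 1 ≤ i ≤ n, and (2) g_{n−2k−1} + g_{n−2k}·Σ_{i=1}^n a_i = −1, where g_j denotes the coefficient of x^j in g. -/

import Mathlib

open Polynomial Finset

noncomputable section

/-- Hamming weight of a vector. -/
def wt {F : Type*} [Field F] {N : ℕ} (w : Fin N → F) : ℕ := Set.ncard {i | w i ≠ 0}

/-- The code `C_k(S,v,∞)` as a set of vectors of length `n+1`. -/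
def codeSet {F : Type*} [Field F] {n : ℕ} (a v : Fin n → F) (k : ℕ) :
    Set (Fin (n + 1) → F) :=
  {w | ∃ f : F[X], f.natDegree ≤ k ∧ f.coeff (k - 1) = 0 ∧
    w = Fin.snoc (fun i => v i * f.eval (a i)) (f.coeff k)}

/-- The Euclidean dual of a set of vectors. -/
def dualSet {F : Type*} [Field F] {N : ℕ} (C : Set (Fin N → F)) : Set (Fin N → F) :=
  {y | ∀ x ∈ C, ∑ i, x i * y i = 0}

/-- A (nonzero) code has minimum distance `d`: some nonzero codeword has weight `d`
and every nonzero codeword has weight at least `d`. -/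
def IsMinDist {F : Type*} [Field F] {N : ℕ} (C : Set (Fin N → F)) (d : ℕ) : Prop :=
  (∃ w ∈ C, w ≠ 0 ∧ wt w = d) ∧ ∀ w ∈ C, w ≠ 0 → d ≤ wt w

/-- `u i = ∏_{j ≠ i} (a i - a j)⁻¹`. -/
def uCoeff {F : Type*} [Field F] {n : ℕ} (a : Fin n → F) (i : Fin n) : F :=
  ∏ j ∈ Finset.univ.erase i, (a i - a j)⁻¹

/-- The set of Schur (componentwise) products of elements of two codes. -/
def schurSet {F : Type*} [Field F] {N : ℕ} (C D : Set (Fin N → F)) : Set (Fin N → F) :=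
  {w | ∃ c ∈ C, ∃ d ∈ D, w = c * d}

/-- The coefficient of `x^j` of a polynomial for an integer index `j`
(zero for negative `j`). -/
def coeffZ {F : Type*} [Field F] (g : F[X]) (j : ℤ) : F :=
  if 0 ≤ j then g.coeff j.toNat else 0

namespace SOAux

variable {F : Type*} [Field F] {n : ℕ} {a : Fin n → F}

lemma uCoeff_ne_zero (ha : Function.Injective a) (i : Fin n) : uCoeff a i ≠ 0 := by
  refine Finset.prod_ne_zero_iff.mpr fun j hj => ?_
  rw [Finset.mem_erase] at hj
  exact inv_ne_zero (sub_ne_zero.mpr fun h => hj.1 (ha h.symm))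

/-- coefficient `n-1` of a polynomial of degree `< n` as a weighted sum of values. -/
lemma coeff_eq_sum (ha : Function.Injective a) {R : F[X]} (hR : R.degree < (n : ℕ)) :
    R.coeff (n - 1) = ∑ i, uCoeff a i * R.eval (a i) := by
  have hinj : Set.InjOn a (Finset.univ : Finset (Fin n)) := ha.injOn
  have hcard : #(Finset.univ : Finset (Fin n)) = n := by simp
  have h := Lagrange.eq_interpolate hinj (by rwa [hcard] : R.degree < #(univ : Finset (Fin n)))
  conv_lhs => rw [h]
  rw [Lagrange.interpolate_apply, finset_sum_coeff]
  refine Finset.sum_congr rfl fun i _ => ?_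
  rw [coeff_C_mul]
  have hbasis : (Lagrange.basis Finset.univ a i).coeff (n - 1) = uCoeff a i := by
    unfold Lagrange.basis Lagrange.basisDivisor
    rw [Finset.prod_mul_distrib, ← map_prod]
    have hm : (∏ j ∈ Finset.univ.erase i, (X - C (a j))).Monic :=
      monic_prod_of_monic _ _ fun j _ => monic_X_sub_C _
    have hd : (∏ j ∈ Finset.univ.erase i, (X - C (a j))).natDegree = n - 1 := by
      rw [natDegree_prod_of_monic _ _ fun j _ => monic_X_sub_C _]
      simp [Finset.card_erase_of_mem]
    rw [coeff_C_mul, ← hd, hm.coeff_natDegree, mul_one]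
    rfl
  rw [hbasis]; ring

end SOAux

namespace SOAux
variable {F : Type*} [Field F] {n : ℕ} {a : Fin n → F}

/-- the key evaluation identity for polynomials of degree ≤ n. -/
lemma sum_u_eval (ha : Function.Injective a) (hn : 1 ≤ n) {Q : F[X]}
    (hQ : ∀ j, n < j → Q.coeff j = 0) :
    ∑ i, uCoeff a i * Q.eval (a i) = Q.coeff (n - 1) + Q.coeff n * ∑ i, a i := by
  set N : F[X] := ∏ i : Fin n, (X - C (a i)) with hN
  have hNm : N.Monic := monic_prod_of_monic _ _ fun i _ => monic_X_sub_C _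
  have hNd : N.natDegree = n := by
    rw [hN, natDegree_prod_of_monic _ _ fun i _ => monic_X_sub_C _]; simp
  have hNpos : 0 < N.natDegree := by omega
  have hNnext : N.coeff (n - 1) = -∑ i, a i := by
    have h1 := Polynomial.Monic.nextCoeff_prod Finset.univ (fun i => (X - C (a i)))
      (fun i _ => monic_X_sub_C _)
    rw [nextCoeff_of_natDegree_pos hNpos, hNd] at h1
    simp only [nextCoeff_X_sub_C] at h1
    rw [h1, Finset.sum_neg_distrib]
  have hNeval : ∀ i, N.eval (a i) = 0 := fun i => by
    rw [hN, eval_prod]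
    exact Finset.prod_eq_zero (Finset.mem_univ i) (by simp)
  set R := Q - C (Q.coeff n) * N with hRdef
  have hRco : ∀ j, n ≤ j → R.coeff j = 0 := by
    intro j hj
    rcases eq_or_lt_of_le hj with h | h
    · rw [hRdef]
      simp only [coeff_sub, coeff_C_mul, ← h]
      rw [show N.coeff n = 1 from by rw [← hNd]; exact hNm.coeff_natDegree, mul_one, sub_self]
    · rw [hRdef]
      simp only [coeff_sub, coeff_C_mul]
      rw [hQ j h, coeff_eq_zero_of_natDegree_lt (show N.natDegree < j by rw [hNd]; omega)]
      ring
  have hRdeg : R.degree < (n : ℕ) := (Polynomial.degree_lt_iff_coeff_zero _ _).mpr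
    (fun m hm => hRco m (by exact_mod_cast hm))
  have hReval : ∀ i, R.eval (a i) = Q.eval (a i) := fun i => by
    simp [hRdef, hNeval i]
  have := coeff_eq_sum ha hRdeg
  simp only [hReval] at this
  rw [← this, hRdef]
  simp only [coeff_sub, coeff_C_mul]
  rw [hNnext]
  ring

lemma coeff_mul_top {p q : F[X]} {A B : ℕ} (hp : ∀ j, A < j → p.coeff j = 0)
    (hq : ∀ j, B < j → q.coeff j = 0) : (p * q).coeff (A + B) = p.coeff A * q.coeff B := by
  rw [coeff_mul]
  rw [Finset.sum_eq_single (A, B)]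
  · intro x hx hne
    rw [Finset.HasAntidiagonal.mem_antidiagonal] at hx
    rcases lt_trichotomy x.1 A with h | h | h
    · rw [hq x.2 (by omega), mul_zero]
    · exact absurd (Prod.ext h (by omega)) hne
    · rw [hp x.1 h, zero_mul]
  · intro h
    exact absurd (Finset.HasAntidiagonal.mem_antidiagonal.mpr (by ring) : ((A, B) : ℕ × ℕ) ∈ Finset.HasAntidiagonal.antidiagonal (A + B)) h

lemma coeff_mul_second {p q : F[X]} {A B : ℕ} (hp : ∀ j, A + 1 < j → p.coeff j = 0)
    (hq : ∀ j, B + 1 < j → q.coeff j = 0) :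
    (p * q).coeff (A + B + 1) = p.coeff (A + 1) * q.coeff B + p.coeff A * q.coeff (B + 1) := by
  rw [coeff_mul]
  have hsub : ({(A + 1, B), (A, B + 1)} : Finset (ℕ × ℕ)) ⊆ Finset.HasAntidiagonal.antidiagonal (A + B + 1) := by
    intro x hx
    simp only [Finset.mem_insert, Finset.mem_singleton] at hx
    rcases hx with rfl | rfl <;> exact Finset.HasAntidiagonal.mem_antidiagonal.mpr (by omega)
  rw [← Finset.sum_subset hsub]
  · rw [Finset.sum_pair (by simp : ((A + 1 : ℕ), B) ≠ (A, B + 1))]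
  · intro x hx hnx
    rw [Finset.HasAntidiagonal.mem_antidiagonal] at hx
    simp only [Finset.mem_insert, Finset.mem_singleton, not_or] at hnx
    rcases lt_trichotomy x.1 A with h | h | h
    · rw [hq x.2 (by omega), mul_zero]
    · exact absurd (Prod.ext h (by omega)) hnx.2
    · rcases eq_or_lt_of_le (Nat.succ_le_of_lt h) with h2 | h2
      · exact absurd (Prod.ext h2.symm (by omega)) hnx.1
      · rw [hp x.1 (by omega), zero_mul]

end SOAux


theorem stmt13 {F : Type*} [Field F] [Fintype F] (n k : ℕ)
    (hk3 : 3 ≤ k) (hkn : k + 2 ≤ n) (hnq : n ≤ Fintype.card F)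
    (a : Fin n → F) (ha : Function.Injective a)
    (v : Fin n → F) (hv : ∀ i, v i ≠ 0) :
    codeSet a v k ⊆ dualSet (codeSet a v k) ↔
      ∃ g : F[X],
        (∀ j : ℕ, ((n : ℤ) - 2 * k) < (j : ℤ) → g.coeff j = 0) ∧
        (∀ i, v i ^ 2 = uCoeff a i * g.eval (a i)) ∧
        coeffZ g ((n : ℤ) - 2 * k - 1) +
            coeffZ g ((n : ℤ) - 2 * k) * (∑ i, a i) = -1 := by
  have hn1 : 1 ≤ n := by omega
  constructor
  · -- forward direction
    intro hsub
    have hip : ∀ f h : F[X], f.natDegree ≤ k → f.coeff (k - 1) = 0 →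
        h.natDegree ≤ k → h.coeff (k - 1) = 0 →
        (∑ i, (v i * h.eval (a i)) * (v i * f.eval (a i))) + h.coeff k * f.coeff k = 0 := by
      intro f h hf1 hf2 hh1 hh2
      have hmemf : (Fin.snoc (fun i => v i * f.eval (a i)) (f.coeff k) : Fin (n+1) → F)
          ∈ codeSet a v k := ⟨f, hf1, hf2, rfl⟩
      have hmemh : (Fin.snoc (fun i => v i * h.eval (a i)) (h.coeff k) : Fin (n+1) → F)
          ∈ codeSet a v k := ⟨h, hh1, hh2, rfl⟩
      have h0 := hsub hmemf _ hmemh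
      rw [Fin.sum_univ_castSucc] at h0
      simpa only [Fin.snoc_castSucc, Fin.snoc_last] using h0
    have hmonP : ∀ j l : ℕ, j ≤ k → l ≤ k → j ≠ k - 1 → l ≠ k - 1 →
        (∑ i, v i ^ 2 * a i ^ (j + l)) +
          (if k = j then (1:F) else 0) * (if k = l then (1:F) else 0) = 0 := by
      intro j l hj hl hj' hl'
      have hcl : (X ^ l : F[X]).coeff (k - 1) = 0 := by
        rw [coeff_X_pow]
        exact if_neg (fun hc => hl' hc.symm)
      have hcj : (X ^ j : F[X]).coeff (k - 1) = 0 := by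
        rw [coeff_X_pow]
        exact if_neg (fun hc => hj' hc.symm)
      have := hip (X ^ l) (X ^ j) (by simpa using hl) hcl (by simpa using hj) hcj
      simp only [eval_pow, eval_X, coeff_X_pow] at this
      have e : ∀ i, (v i * a i ^ j) * (v i * a i ^ l) = v i ^ 2 * a i ^ (j + l) := by
        intro i; rw [pow_add]; ring
      rw [Finset.sum_congr rfl (fun i _ => e i)] at this
      exact this
    have hP1 : ∀ t, t ≤ 2 * k - 2 → ∑ i, v i ^ 2 * a i ^ t = 0 := by
      intro t ht
      have hcase : ∃ j l, j + l = t ∧ j ≤ k ∧ l ≤ k ∧ j ≠ k - 1 ∧ l ≠ k - 1 ∧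
          ¬(k = j ∧ k = l) := by
        rcases le_or_gt t (k - 2) with h | h
        · exact ⟨t, 0, by omega, by omega, by omega, by omega, by omega, by omega⟩
        · rcases le_or_gt t (2 * k - 4) with h2 | h2
          · exact ⟨k - 2, t - (k - 2), by omega, by omega, by omega, by omega, by omega,
              by omega⟩
          · rcases (by omega : t = 2 * k - 3 ∨ t = 2 * k - 2) with rfl | rfl
            · exact ⟨k, k - 3, by omega, by omega, by omega, by omega, by omega, by omega⟩
            · exact ⟨k, k - 2, by omega, by omega, by omega, by omega, by omega, by omega⟩
      obtain ⟨j, l, rfl, hj, hl, hj', hl', hne⟩ := hcase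
      have hz : (if k = j then (1:F) else 0) * (if k = l then (1:F) else 0) = 0 := by
        by_cases h1 : k = j
        · by_cases h2 : k = l
          · exact absurd ⟨h1, h2⟩ hne
          · simp [h2]
        · simp [h1]
      have := hmonP j l hj hl hj' hl'
      rw [hz, add_zero] at this
      exact this
    have hP2 : ∑ i, v i ^ 2 * a i ^ (2 * k) = -1 := by
      have := hmonP k k le_rfl le_rfl (by omega) (by omega)
      rw [if_pos rfl, ← two_mul] at this
      linear_combination this
    have h2k : 2 * k ≤ n := by
      by_contra hlt
      push_neg at hlt
      set w : Fin n → F := fun i => v i ^ 2 with hw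
      set M : Matrix (Fin n) (Fin n) F := fun t i => a i ^ (t : ℕ) with hM
      have hMv : M.mulVec w = 0 := by
        funext t
        simp only [Matrix.mulVec, dotProduct, hM, hw, Pi.zero_apply]
        rw [Finset.sum_congr rfl (fun i _ => mul_comm (a i ^ (t : ℕ)) (v i ^ 2))]
        exact hP1 t (by omega)
      have hdet : IsUnit M.det := by
        have hMe : M = Matrix.transpose (Matrix.vandermonde a) := by
          funext t i; rfl
        rw [hMe, Matrix.det_transpose, Matrix.det_vandermonde]
        refine isUnit_iff_ne_zero.mpr (Finset.prod_ne_zero_iff.mpr fun i _ =>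
          Finset.prod_ne_zero_iff.mpr fun j hj => sub_ne_zero.mpr fun h => ?_)
        rw [Finset.mem_Ioi] at hj
        exact absurd (ha h) (ne_of_gt hj)
      have hw0 : w = 0 := by
        calc w = (M⁻¹ * M).mulVec w := by
              rw [Matrix.nonsing_inv_mul M hdet, Matrix.one_mulVec]
          _ = M⁻¹.mulVec (M.mulVec w) := by rw [Matrix.mulVec_mulVec]
          _ = 0 := by rw [hMv, Matrix.mulVec_zero]
      have h0 := congrFun hw0 ⟨0, by omega⟩
      exact hv _ ((pow_eq_zero_iff two_ne_zero).mp h0)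
    set g : F[X] := Lagrange.interpolate Finset.univ a
      (fun i => v i ^ 2 * (uCoeff a i)⁻¹) with hg
    have hgdeg : g.degree < (n : ℕ) := by
      have := Lagrange.degree_interpolate_lt (s := Finset.univ) (v := a) (r := fun i => v i ^ 2 * (uCoeff a i)⁻¹) ha.injOn
      simp only [Finset.card_univ, Fintype.card_fin] at this
      exact this
    have hgval : ∀ i, v i ^ 2 = uCoeff a i * g.eval (a i) := by
      intro i
      rw [hg, Lagrange.eval_interpolate_at_node _ ha.injOn (Finset.mem_univ i),
        mul_comm (uCoeff a i), mul_assoc, inv_mul_cancel₀ (SOAux.uCoeff_ne_zero ha i), mul_one]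
    have hPg : ∀ s : ℕ, ∑ i, uCoeff a i * (g * X ^ s).eval (a i)
        = ∑ i, v i ^ 2 * a i ^ s := by
      intro s
      refine Finset.sum_congr rfl fun i _ => ?_
      rw [eval_mul, eval_pow, eval_X, hgval i]; ring
    have hgtop : ∀ s, s ≤ 2 * k - 2 → g.coeff (n - 1 - s) = 0 := by
      intro s
      induction s using Nat.strong_induction_on with
      | _ s IH =>
        intro hs
        have hcz : ∀ j, n - 1 - s < j → g.coeff j = 0 := by
          intro j hj
          rcases le_or_gt n j with h | h
          · exact coeff_eq_zero_of_degree_lt (lt_of_lt_of_le hgdeg (by exact_mod_cast h))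
          · have e : j = n - 1 - (n - 1 - j) := by omega
            rw [e]
            exact IH (n - 1 - j) (by omega) (by omega)
        have hdeg2 : (g * X ^ s).degree < ((n : ℕ) : WithBot ℕ) := by
          rw [Polynomial.degree_lt_iff_coeff_zero]
          intro jj hjj
          have hjj' : n ≤ jj := by exact_mod_cast hjj
          rw [coeff_mul_X_pow']
          split
          · exact hcz _ (by omega)
          · rfl
        have hA := SOAux.coeff_eq_sum ha hdeg2
        have h2 : (g * X ^ s).coeff (n - 1) = g.coeff (n - 1 - s) := by
          rw [coeff_mul_X_pow', if_pos (by omega)]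
        rw [h2] at hA
        rw [hA, hPg s]
        exact hP1 s hs
    have hgco : ∀ j : ℕ, n - 2 * k < j → g.coeff j = 0 := by
      intro j hj
      rcases le_or_gt n j with h | h
      · exact coeff_eq_zero_of_degree_lt (lt_of_lt_of_le hgdeg (by exact_mod_cast h))
      · have e : j = n - 1 - (n - 1 - j) := by omega
        rw [e]; exact hgtop _ (by omega)
    refine ⟨g, ?_, hgval, ?_⟩
    · intro j hj
      exact hgco j (by omega)
    · have hQco : ∀ j, n < j → (g * X ^ (2 * k)).coeff j = 0 := by
        intro j hj
        rw [coeff_mul_X_pow']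
        split
        · exact hgco _ (by omega)
        · rfl
      have hB := SOAux.sum_u_eval ha hn1 hQco
      rw [hPg (2 * k), hP2] at hB
      have hc1 : (g * X ^ (2 * k)).coeff n = coeffZ g ((n : ℤ) - 2 * k) := by
        rw [coeff_mul_X_pow', if_pos (by omega), coeffZ, if_pos (by omega)]
        congr 1; omega
      have hc2 : (g * X ^ (2 * k)).coeff (n - 1) = coeffZ g ((n : ℤ) - 2 * k - 1) := by
        rcases Nat.eq_or_lt_of_le h2k with he | hlt
        · rw [coeff_mul_X_pow', if_neg (by omega), coeffZ, if_neg (by omega)]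
        · rw [coeff_mul_X_pow', if_pos (by omega), coeffZ, if_pos (by omega)]
          congr 1; omega
      rw [hc1, hc2] at hB
      exact hB.symm
  · -- backward direction
    rintro ⟨g, hg1, hg2, hg3⟩
    have h2k : 2 * k ≤ n := by
      by_contra hlt
      push_neg at hlt
      have hg0 : g = 0 := Polynomial.ext fun j => by
        rw [coeff_zero]; exact hg1 j (by push_cast; omega)
      have h0 := hg2 ⟨0, by omega⟩
      rw [hg0] at h0
      simp only [eval_zero, mul_zero] at h0
      exact hv _ ((pow_eq_zero_iff two_ne_zero).mp h0)
    have hgco : ∀ j, n - 2 * k < j → g.coeff j = 0 := fun j hj =>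
      hg1 j (by push_cast; omega)
    intro w hw x hx
    obtain ⟨f, hf1, hf2, rfl⟩ := hw
    obtain ⟨h, hh1, hh2, rfl⟩ := hx
    rw [Fin.sum_univ_castSucc]
    simp only [Fin.snoc_castSucc, Fin.snoc_last]
    have key : ∑ i, (v i * h.eval (a i)) * (v i * f.eval (a i))
        = ∑ i, uCoeff a i * (g * (h * f)).eval (a i) := by
      refine Finset.sum_congr rfl fun i _ => ?_
      rw [eval_mul, eval_mul]
      calc (v i * h.eval (a i)) * (v i * f.eval (a i))
          = v i ^ 2 * (h.eval (a i) * f.eval (a i)) := by ring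
        _ = uCoeff a i * (g.eval (a i) * (h.eval (a i) * f.eval (a i))) := by
            rw [hg2 i]; ring
    rw [key]
    have hhf_co : ∀ j, k + k < j → (h * f).coeff j = 0 := fun j hj =>
      coeff_eq_zero_of_natDegree_lt (lt_of_le_of_lt
        (natDegree_mul_le.trans (add_le_add hh1 hf1)) hj)
    have hQ : ∀ j, n < j → (g * (h * f)).coeff j = 0 := by
      intro j hj
      apply coeff_eq_zero_of_natDegree_lt
      calc (g * (h * f)).natDegree ≤ g.natDegree + (h * f).natDegree := natDegree_mul_le
        _ ≤ (n - 2 * k) + (k + k) := add_le_add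
            (natDegree_le_iff_coeff_eq_zero.mpr hgco)
            (natDegree_mul_le.trans (add_le_add hh1 hf1))
        _ < j := by omega
    rw [SOAux.sum_u_eval ha hn1 hQ]
    have hco_f : ∀ j, k < j → f.coeff j = 0 := fun j hj =>
      coeff_eq_zero_of_natDegree_lt (by omega)
    have hco_h : ∀ j, k < j → h.coeff j = 0 := fun j hj =>
      coeff_eq_zero_of_natDegree_lt (by omega)
    have e4 : (h * f).coeff (k + k) = h.coeff k * f.coeff k :=
      SOAux.coeff_mul_top hco_h hco_f
    have htop : (g * (h * f)).coeff n = coeffZ g ((n : ℤ) - 2 * k) * (h.coeff k * f.coeff k) := by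
      have e : n = (n - 2 * k) + (k + k) := by omega
      rw [e, SOAux.coeff_mul_top hgco hhf_co, e4, coeffZ, if_pos (by omega)]
      congr 2
      omega
    have hfh1 : (h * f).coeff (2 * k - 1) = 0 := by
      obtain ⟨k1, rfl⟩ : ∃ k1, k = k1 + 1 := ⟨k - 1, by omega⟩
      have e : 2 * (k1 + 1) - 1 = k1 + k1 + 1 := by omega
      rw [e, SOAux.coeff_mul_second (fun j hj => hco_h j (by omega))
        (fun j hj => hco_f j (by omega))]
      have e1 : k1 + 1 - 1 = k1 := by omega
      rw [e1] at hf2 hh2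
      rw [hf2, hh2]; ring
    have hsec : (g * (h * f)).coeff (n - 1)
        = coeffZ g ((n : ℤ) - 2 * k - 1) * (h.coeff k * f.coeff k) := by
      rcases Nat.eq_or_lt_of_le h2k with he | hlt
      · have hg0 : g.natDegree = 0 := Nat.le_zero.mp
          (natDegree_le_iff_coeff_eq_zero.mpr (fun j hj => hgco j (by omega)))
        obtain ⟨c, hc⟩ := Polynomial.natDegree_eq_zero.mp hg0
        have e : n - 1 = 2 * k - 1 := by omega
        rw [coeffZ, if_neg (by omega), zero_mul, ← hc, coeff_C_mul, e, hfh1, mul_zero]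
      · have e : n - 1 = (n - 2 * k - 1) + (2 * k - 1) + 1 := by omega
        rw [e, SOAux.coeff_mul_second (fun j hj => hgco j (by omega))
          (fun j hj => hhf_co j (by omega))]
        have e2 : n - 2 * k - 1 + 1 = n - 2 * k := by omega
        have e3 : 2 * k - 1 + 1 = 2 * k := by omega
        rw [e2, e3, hfh1, mul_zero, zero_add]
        have e5 : 2 * k = k + k := by omega
        rw [e5, e4, coeffZ, if_pos (by omega)]
        congr 2
        omega
    rw [htop, hsec]
    linear_combination (h.coeff k * f.coeff k) * hg3
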